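/- Let p ≥ 3 be a prime. Then for all integers n ≥ 0, α ≥ 0, δ ≥ 0, and every t ∈ {1, 2, …, p−1}, the number of overpartition triples with odd parts satisfies OPT(2·3^{2α}·p^{2δ+1}(pn+t) + 3^{2α}·p^{2(δ+1)}) ≡ 0 (mod 4). -/
import Mathlib


/-- An overpartition with odd parts, encoded as a pair of multisets of odd
(hence positive) integers: the overlined parts (which are distinct, since the
last occurrence of each part size may be overlined) and the non-overlined
parts. -/
def IsOddOverpartition (p : Multiset ℕ × Multiset ℕ) : Prop :=
  p.1.Nodup ∧ (∀ x ∈ p.1, Odd x) ∧ (∀ x ∈ p.2, Odd x)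

/-- `OPT k n` is the number of overpartition `k`-tuples of `n` with odd parts,
with generating function `∏_{i≥1} ((1+q^{2i-1})/(1-q^{2i-1}))^k`. -/
noncomputable def OPT (k n : ℕ) : ℕ :=
  Set.ncard {f : Fin k → Multiset ℕ × Multiset ℕ |
    (∀ i, IsOddOverpartition (f i)) ∧ (∑ i, ((f i).1.sum + (f i).2.sum)) = n}

open Multiset in
/-- the set of single overpartitions with odd parts of `m`, as a subtype -/
abbrev OP1 (m : ℕ) := {p : Multiset ℕ × Multiset ℕ //
  IsOddOverpartition p ∧ p.1.sum + p.2.sum = m}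

/-- odd partitions of `m` -/
abbrev OddP (m : ℕ) := {l : Nat.Partition m // ∀ x ∈ l.parts, Odd x}

abbrev Fib {m : ℕ} (l : OddP m) := {q : Finset ℕ × Multiset ℕ // q.1.val + q.2 = l.1.parts}

def equivA (m : ℕ) : OP1 m ≃ Σ l : OddP m, Fib l where
  toFun p := ⟨⟨⟨p.1.1 + p.1.2,
      fun hi => by
        rcases Multiset.mem_add.1 hi with h | h
        · exact (p.2.1.2.1 _ h).pos
        · exact (p.2.1.2.2 _ h).pos,
      by rw [Multiset.sum_add]; exact p.2.2⟩,
      fun x hx => by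
        rcases Multiset.mem_add.1 hx with h | h
        · exact p.2.1.2.1 _ h
        · exact p.2.1.2.2 _ h⟩,
    ⟨(p.1.1.toFinset, p.1.2), by
      show p.1.1.toFinset.val + p.1.2 = p.1.1 + p.1.2
      rw [Multiset.toFinset_val, Multiset.dedup_eq_self.2 p.2.1.1]⟩⟩
  invFun x := ⟨(x.2.1.1.val, x.2.1.2),
    ⟨⟨x.2.1.1.nodup,
      fun y hy => x.1.2 y (by rw [← x.2.2]; exact Multiset.mem_add.2 (Or.inl hy)),
      fun y hy => x.1.2 y (by rw [← x.2.2]; exact Multiset.mem_add.2 (Or.inr hy))⟩,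
      by rw [← Multiset.sum_add, x.2.2, x.1.1.parts_sum]⟩⟩
  left_inv p := by
    obtain ⟨⟨D, M⟩, ⟨hN, hDo, hMo⟩, hsum⟩ := p
    apply Subtype.ext
    show (D.toFinset.val, M) = (D, M)
    rw [Multiset.toFinset_val, Multiset.dedup_eq_self.2 hN]
  right_inv x := by
    obtain ⟨⟨⟨parts, pos, psum⟩, hl⟩, ⟨⟨s, M⟩, hq⟩⟩ := x
    simp only at hq
    subst hq
    show Sigma.mk _ _ = Sigma.mk _ _
    congr 1
    · apply Subtype.ext
      show (s.val.toFinset, M) = (s, M)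
      rw [Finset.val_toFinset]

def equivB {m : ℕ} (l : OddP m) : Fib l ≃ {s // s ∈ l.1.parts.toFinset.powerset} where
  toFun q := ⟨q.1.1, by
    rw [Finset.mem_powerset]
    intro x hx
    rw [Multiset.mem_toFinset, ← q.2]
    exact Multiset.mem_add.2 (Or.inl (by exact_mod_cast hx))⟩
  invFun s := ⟨(s.1, l.1.parts - s.1.val), by
    apply add_tsub_cancel_of_le
    exact (Multiset.le_iff_subset s.1.nodup).2
      (fun x hx => Multiset.mem_toFinset.1 (Finset.mem_powerset.1 s.2 hx))⟩
  left_inv q := by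
    obtain ⟨⟨s, M⟩, hq⟩ := q
    apply Subtype.ext
    simp only at hq
    show (s, (l.1.parts - s.val)) = (s, M)
    rw [← hq, add_tsub_cancel_left]
  right_inv s := rfl

/-- weighted count of odd partitions -/
def Pw (m : ℕ) : ℕ := ∑ l : OddP m, 2 ^ l.1.parts.toFinset.card

theorem card_OP1 (m : ℕ) : Nat.card (OP1 m) = Pw m := by
  rw [Nat.card_congr ((equivA m).trans (Equiv.sigmaCongrRight (fun l => equivB l)))]
  rw [Nat.card_eq_fintype_card, Fintype.card_sigma, Pw]
  congr 1
  funext l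
  rw [Fintype.card_coe, Finset.card_powerset]

abbrev Tm (m : ℕ) := Σ l : OddP m, {s // s ∈ l.1.parts.toFinset.powerset}

def equiv1 (m : ℕ) : OP1 m ≃ Tm m := (equivA m).trans (Equiv.sigmaCongrRight (fun l => equivB l))

theorem card_Tm (m : ℕ) : Fintype.card (Tm m) = Pw m := by
  rw [Fintype.card_sigma, Pw]
  congr 1
  funext l
  rw [Fintype.card_coe, Finset.card_powerset]

/-- fiber of the sum-type map -/
abbrev FibT (n : ℕ) (x : {x : Fin 3 → ℕ // x ∈ Finset.Nat.antidiagonalTuple 3 n}) :=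
  {g : Fin 3 → Multiset ℕ × Multiset ℕ //
    ∀ i, IsOddOverpartition (g i) ∧ (g i).1.sum + (g i).2.sum = x.1 i}

def equivFib (n : ℕ) (x : {x : Fin 3 → ℕ // x ∈ Finset.Nat.antidiagonalTuple 3 n}) :
    FibT n x ≃ Π i : Fin 3, OP1 (x.1 i) where
  toFun g := fun i => ⟨g.1 i, g.2 i⟩
  invFun h := ⟨fun i => (h i).1, fun i => (h i).2⟩
  left_inv g := rfl
  right_inv h := rfl

def equivTop (n : ℕ) :
    ↥{f : Fin 3 → Multiset ℕ × Multiset ℕ |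
      (∀ i, IsOddOverpartition (f i)) ∧ (∑ i, ((f i).1.sum + (f i).2.sum)) = n}
    ≃ Σ x : {x : Fin 3 → ℕ // x ∈ Finset.Nat.antidiagonalTuple 3 n}, FibT n x where
  toFun f := ⟨⟨fun i => (f.1 i).1.sum + (f.1 i).2.sum,
      Finset.Nat.mem_antidiagonalTuple.2 f.2.2⟩,
    ⟨f.1, fun i => ⟨f.2.1 i, rfl⟩⟩⟩
  invFun x := ⟨x.2.1,
    ⟨fun i => (x.2.2 i).1, by
      rw [show (∑ i, ((x.2.1 i).1.sum + (x.2.1 i).2.sum)) = ∑ i, x.1.1 i from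
        Finset.sum_congr rfl fun i _ => (x.2.2 i).2]
      exact Finset.Nat.mem_antidiagonalTuple.1 x.1.2⟩⟩
  left_inv f := rfl
  right_inv x := by
    obtain ⟨⟨xv, hxv⟩, ⟨g, hg⟩⟩ := x
    have h : (fun i => ((g i).1.sum + (g i).2.sum)) = xv := funext fun i => (hg i).2
    subst h
    rfl

set_option maxHeartbeats 2000000 in
theorem OPT_eq (n : ℕ) :
    OPT 3 n = ∑ x ∈ Finset.Nat.antidiagonalTuple 3 n, ∏ i, Pw (x i) := by
  rw [OPT, ← Nat.card_coe_set_eq]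
  rw [Nat.card_congr ((equivTop n).trans
    (Equiv.sigmaCongrRight (fun x => (equivFib n x).trans
      (Equiv.piCongrRight (fun i => equiv1 (x.1 i))))))]
  rw [Nat.card_eq_fintype_card, Fintype.card_sigma]
  rw [← Finset.sum_coe_sort (Finset.Nat.antidiagonalTuple 3 n) (fun x => ∏ i, Pw (x i))]
  congr 1
  funext x
  rw [Fintype.card_pi]
  congr 1
  funext i
  rw [card_Tm]

theorem Pw_zero : Pw 0 = 1 := by
  rw [Pw]
  have h : ∀ l : OddP 0, 2 ^ l.1.parts.toFinset.card = 1 := by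
    intro l
    simp [Nat.Partition.partition_zero_parts l.1]
  rw [Finset.sum_congr rfl (fun l _ => h l), Finset.sum_const, smul_eq_mul, mul_one,
    Finset.card_univ]
  refine Fintype.card_eq_one_iff.2 ⟨⟨default, ?_⟩, fun y => Subtype.ext (Subsingleton.elim _ _)⟩
  intro x hx
  simp [Nat.Partition.partition_zero_parts] at hx

theorem toFinset_card_pos {m : ℕ} (hm : m ≠ 0) (l : OddP m) :
    0 < l.1.parts.toFinset.card := by
  rw [Finset.card_pos, Multiset.toFinset_nonempty]
  intro h
  exact hm (by rw [← l.1.parts_sum, h, Multiset.sum_zero])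

theorem even_Pw {m : ℕ} (hm : m ≠ 0) : 2 ∣ Pw m := by
  refine Finset.dvd_sum fun l _ => ?_
  exact dvd_pow_self 2 (toFinset_card_pos hm l).ne'

theorem four_dvd_Pw {m : ℕ} (hm : m ≠ 0)
    (hcard : Even ((m.divisors.filter (fun d => Odd d)).card)) : 4 ∣ Pw m := by
  classical
  rw [Pw, ← Finset.sum_filter_add_sum_filter_not Finset.univ
    (fun l : OddP m => l.1.parts.toFinset.card = 1)]
  refine dvd_add ?_ (Finset.dvd_sum fun l hl => ?_)
  · have h2 : ∀ l ∈ Finset.univ.filter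
        (fun l : OddP m => l.1.parts.toFinset.card = 1),
        2 ^ l.1.parts.toFinset.card = 2 := by
      intro l hl
      rw [(Finset.mem_filter.1 hl).2, pow_one]
    rw [Finset.sum_congr rfl h2, Finset.sum_const, smul_eq_mul]
    have hbij : (Finset.univ.filter
        (fun l : OddP m => l.1.parts.toFinset.card = 1)).card
        = (m.divisors.filter (fun d => Odd d)).card := by
      refine (Finset.card_bij
        (fun (a : ℕ) (ha : a ∈ m.divisors.filter (fun d => Odd d)) =>
          (⟨⟨Multiset.replicate (m / a) a,
            fun hi => by
              rw [Multiset.eq_of_mem_replicate hi]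
              exact (Finset.mem_filter.1 ha).2.pos,
            by
              rw [Multiset.sum_replicate, smul_eq_mul,
                Nat.div_mul_cancel (Nat.dvd_of_mem_divisors (Finset.mem_filter.1 ha).1)]⟩,
            fun x hx => by
              rw [Multiset.eq_of_mem_replicate hx]
              exact (Finset.mem_filter.1 ha).2⟩ : OddP m)
          ) ?_ ?_ ?_).symm
      · intro a ha
        have hd := Nat.dvd_of_mem_divisors (Finset.mem_filter.1 ha).1
        have ha0 : a ≠ 0 := by
          rintro rfl
          exact hm (Nat.eq_zero_of_zero_dvd hd)
        have hk : m / a ≠ 0 := by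
          intro h
          exact hm (by rw [← Nat.div_mul_cancel hd, h, zero_mul])
        simp only [Finset.mem_filter, Finset.mem_univ, true_and]
        show (Multiset.replicate (m / a) a).toFinset.card = 1
        rw [Multiset.toFinset_replicate, if_neg hk, Finset.card_singleton]
      · intro a ha b hb hab
        have hka : m / a ≠ 0 := by
          intro h
          exact hm (by rw [← Nat.div_mul_cancel
            (Nat.dvd_of_mem_divisors (Finset.mem_filter.1 ha).1), h, zero_mul])
        have : a ∈ Multiset.replicate (m / b) b := by
          have := congrArg (fun l : OddP m => l.1.parts) hab
          simp only at this
          rw [← this]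
          exact Multiset.mem_replicate.2 ⟨hka, rfl⟩
        exact Multiset.eq_of_mem_replicate this
      · intro l hl
        obtain ⟨a, hfa⟩ := Finset.card_eq_one.1 (Finset.mem_filter.1 hl).2
        have hmem : a ∈ l.1.parts := by
          rw [← Multiset.mem_toFinset, hfa]
          exact Finset.mem_singleton_self a
        have hrep : l.1.parts = Multiset.replicate (Multiset.card l.1.parts) a :=
          Multiset.eq_replicate_card.2 fun b hb => by
            have : b ∈ l.1.parts.toFinset := Multiset.mem_toFinset.2 hb
            rw [hfa] at this
            exact Finset.mem_singleton.1 this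
        have hsum : Multiset.card l.1.parts * a = m := by
          have := l.1.parts_sum
          rw [hrep, Multiset.sum_replicate, smul_eq_mul] at this
          exact this
        have ha0 : a ≠ 0 := (l.1.parts_pos hmem).ne'
        refine ⟨a, Finset.mem_filter.2 ⟨Nat.mem_divisors.2
          ⟨Dvd.intro_left _ hsum, hm⟩, l.2 a hmem⟩, ?_⟩
        apply Subtype.ext
        apply Nat.Partition.ext
        show Multiset.replicate (m / a) a = l.1.parts
        rw [hrep]
        congr 1
        exact Nat.div_eq_of_eq_mul_left (Nat.pos_of_ne_zero ha0) hsum.symm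
    rw [hbij]
    obtain ⟨c, hc⟩ := hcard
    rw [hc, show (4 : ℕ) = 2 * 2 from rfl]
    ring_nf
    exact Dvd.intro c (by ring)
  · have h2 : 2 ≤ l.1.parts.toFinset.card := by
      rcases Nat.lt_or_ge l.1.parts.toFinset.card 2 with h | h
      · interval_cases h' : l.1.parts.toFinset.card
        · exact absurd h' (toFinset_card_pos hm l).ne'
        · exact absurd h' (Finset.mem_filter.1 hl).2
      · exact h
    calc (4 : ℕ) = 2 ^ 2 := rfl
    _ ∣ 2 ^ l.1.parts.toFinset.card := pow_dvd_pow 2 h2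


/-- For a prime `p ≥ 3`, all `n, α, δ ≥ 0` and `t ∈ {1, …, p-1}`,
`OPT(2·3^{2α}·p^{2δ+1}(pn+t) + 3^{2α}·p^{2(δ+1)}) ≡ 0 (mod 4)`. -/
theorem opt_triple_inf_family_mod_four (p : ℕ) (hp : p.Prime) (hp3 : 3 ≤ p)
    (n α δ t : ℕ) (ht1 : 1 ≤ t) (ht2 : t ≤ p - 1) :
    OPT 3 (2 * 3 ^ (2 * α) * p ^ (2 * δ + 1) * (p * n + t) + 3 ^ (2 * α) * p ^ (2 * (δ + 1)))
      ≡ 0 [MOD 4] := by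
  set N := 2 * 3 ^ (2 * α) * p ^ (2 * δ + 1) * (p * n + t) + 3 ^ (2 * α) * p ^ (2 * (δ + 1)) with hN
  have hp2 : p ≠ 2 := by omega
  have hpodd : Odd p := hp.odd_of_ne_two hp2
  have hp0 : 0 < p := hp.pos
  have hM : N = 3 ^ (2 * α) * p ^ (2 * δ + 1) * (2 * (p * n + t) + p) := by
    rw [hN]; ring
  have hModd : Odd (2 * (p * n + t) + p) := Even.add_odd (even_two_mul _) hpodd
  have hM0 : 2 * (p * n + t) + p ≠ 0 := by omega
  have hN0 : N ≠ 0 := by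
    rw [hM]
    positivity
  have hNodd : Odd N := by
    rw [hM]
    exact (((Odd.pow (⟨1, by norm_num⟩ : Odd 3)).mul (hpodd.pow)).mul hModd)
  have hpM : ¬ p ∣ (2 * (p * n + t) + p) := by
    intro hdvd
    have h1 : p ∣ 2 * t := by
      have h2 : p ∣ 2 * (p * n) + p := ⟨2 * n + 1, by ring⟩
      have h3 : 2 * (p * n + t) + p = (2 * (p * n) + p) + 2 * t := by ring
      rw [h3] at hdvd
      exact (Nat.dvd_add_right h2).mp hdvd
    rcases (Nat.Prime.dvd_mul hp).1 h1 with h | h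
    · exact hp2 (Nat.le_antisymm (Nat.le_of_dvd (by norm_num) h) (by omega))
    · have := Nat.le_of_dvd (by omega) h
      omega
  have hvodd : Odd (N.factorization p) := by
    have hA : (3 ^ (2 * α) : ℕ) ≠ 0 := by positivity
    have hB : (p ^ (2 * δ + 1) : ℕ) ≠ 0 := by positivity
    rw [hM, Nat.factorization_mul (by positivity) hM0,
      Nat.factorization_mul hA hB, Finsupp.add_apply, Finsupp.add_apply,
      Nat.factorization_eq_zero_of_not_dvd hpM,
      Nat.factorization_pow, Nat.factorization_pow, Finsupp.smul_apply, Finsupp.smul_apply,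
      hp.factorization, Finsupp.single_eq_same]
    have h3 : (Nat.factorization 3) p = if p = 3 then 1 else 0 := by
      rw [(by norm_num : Nat.Prime 3).factorization, Finsupp.single_apply]
      split_ifs with h1 h2 h2
      · rfl
      · exact absurd h1.symm h2
      · exact absurd h2.symm h1
      · rfl
    rw [h3]
    split_ifs with h
    · exact ⟨α + δ, by ring⟩
    · exact ⟨δ, by ring⟩
  have hcard : Even ((N.divisors.filter (fun d => Odd d)).card) := by
    rw [Finset.filter_true_of_mem (fun a ha => Odd.of_dvd_nat hNodd (Nat.dvd_of_mem_divisors ha))]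
    have hpN : p ∣ N := by
      rw [hM]
      exact Dvd.dvd.mul_right (Dvd.dvd.mul_left (dvd_pow_self p (by omega)) _) _
    have hmem : p ∈ N.primeFactors := Nat.mem_primeFactors.2 ⟨hp, hpN, hN0⟩
    rw [Nat.card_divisors hN0]
    have h2 : 2 ∣ (N.factorization p + 1) := by
      obtain ⟨k, hk⟩ := hvodd
      exact ⟨k + 1, by omega⟩
    exact (even_iff_two_dvd).2
      (dvd_trans h2 (Finset.dvd_prod_of_mem _ hmem))
  rw [Nat.modEq_zero_iff_dvd, OPT_eq]
  refine Finset.dvd_sum fun x hx => ?_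
  have hsum : ∑ i, x i = N := Finset.Nat.mem_antidiagonalTuple.1 hx
  by_cases hex : ∃ i j, i ≠ j ∧ x i ≠ 0 ∧ x j ≠ 0
  · obtain ⟨i, j, hij, hi, hj⟩ := hex
    have h4 : (4 : ℕ) ∣ Pw (x i) * Pw (x j) := by
      have := mul_dvd_mul (even_Pw hi) (even_Pw hj)
      exact this
    refine dvd_trans h4 ?_
    have hsub := Finset.prod_dvd_prod_of_subset {i, j} Finset.univ (fun k => Pw (x k))
      (Finset.subset_univ _)
    rwa [Finset.prod_pair hij] at hsub
  · push_neg at hex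
    obtain ⟨i, hi⟩ : ∃ i, x i ≠ 0 := by
      by_contra hall
      push_neg at hall
      apply hN0
      rw [← hsum]
      exact Finset.sum_eq_zero fun i _ => hall i
    have hzero : ∀ j, j ≠ i → x j = 0 := fun j hj => hex i j (fun h => hj h.symm) hi
    have hxiN : x i = N := by
      rw [← hsum]
      exact (Finset.sum_eq_single i (fun j _ hj => hzero j hj)
        (fun h => absurd (Finset.mem_univ i) h)).symm
    have hprod : ∏ k, Pw (x k) = Pw (x i) :=
      Finset.prod_eq_single i
        (fun j _ hj => by rw [hzero j hj, Pw_zero])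
        (fun h => absurd (Finset.mem_univ i) h)
    rw [hprod, hxiN]
    exact four_dvd_Pw hN0 hcard
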